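/- arXiv:0812.2573 — 2 statements merged into one kernel-verified Lean document; each statement's English description precedes it below -/
import Mathlib

section
/- Let V be a finite-dimensional complex inner product space, φ : V → V self-adjoint, ν ∈ spec(φ) and u ∈ V_ν∖{0}. Then the stable set of the fixed point x = [u] of the projective flow Φ generated by φ is W⁺(x) = {y ∈ ℙ(V) : lim_{t→+∞} Φ(t,y) = x} = {[u + w] : w ∈ ⊕_{μ∈spec(φ), μ<ν} V_μ}, and the unstable set is W⁻(x) = {y ∈ ℙ(V) : lim_{t→−∞} Φ(t,y) = x} = {[u + w] : w ∈ ⊕_{μ∈spec(φ), μ>ν} V_μ}. -/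
set_option maxHeartbeats 1000000
set_option synthInstance.maxHeartbeats 400000


open scoped LinearAlgebra.Projectivization
open Filter

variable {V : Type*} [NormedAddCommGroup V] [InnerProductSpace ℂ V] [FiniteDimensional ℂ V]

/-- The quotient topology on complex projective space. -/
noncomputable instance instTopPV : TopologicalSpace (ℙ ℂ V) :=
  @instTopologicalSpaceQuotient _ (projectivizationSetoid ℂ V) _

theorem exp_toLinearMap_injective (ψ : V →L[ℂ] V) :
    Function.Injective (NormedSpace.exp ψ).toLinearMap := by
  obtain ⟨u, hu⟩ := NormedSpace.isUnit_exp_of_mem_ball (𝕂 := ℝ) (x := ψ)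
    ((NormedSpace.expSeries_radius_eq_top ℝ (V →L[ℂ] V)).symm ▸ edist_lt_top _ _)
  intro a b hab
  have h2 : (↑u⁻¹ * ↑u : V →L[ℂ] V) a = (↑u⁻¹ * ↑u : V →L[ℂ] V) b := by
    simp only [ContinuousLinearMap.mul_apply]
    rw [hu]
    exact congrArg _ hab
  simpa [u.inv_mul] using h2

/-- The projective flow generated by a linear map `φ`: `Φ(t, [v]) = [e^{tφ} v]`. -/
noncomputable def projFlow (φ : V →ₗ[ℂ] V) (t : ℝ) : ℙ ℂ V → ℙ ℂ V :=
  Projectivization.map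
    (NormedSpace.exp (t • LinearMap.toContinuousLinearMap φ)).toLinearMap
    (exp_toLinearMap_injective _)

namespace ProjFlowAux

local notation "⟪" x ", " y "⟫" => @inner ℂ _ _ x y

lemma mk_congr {v w : V} (hv : v ≠ 0) (hw : w ≠ 0) (h : v = w) :
    Projectivization.mk ℂ v hv = Projectivization.mk ℂ w hw := by subst h; rfl

lemma mk_smul {v : V} (hv : v ≠ 0) {c : ℂ} (hc : c ≠ 0) (h : c • v ≠ 0) :
    Projectivization.mk ℂ (c • v) h = Projectivization.mk ℂ v hv :=
  (Projectivization.mk_eq_mk_iff' ℂ _ _ h hv).2 ⟨c, rfl⟩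

lemma exp_ne_zero_vec (A : V →L[ℂ] V) {v : V} (hv : v ≠ 0) :
    NormedSpace.exp A v ≠ 0 := fun h0 =>
  hv (exp_toLinearMap_injective A (show (NormedSpace.exp A).toLinearMap v = (NormedSpace.exp A).toLinearMap 0 by simp [h0]))

lemma exp_apply_eigen (A : V →L[ℂ] V) (a : ℂ) (x : V) (h : A x = a • x) :
    NormedSpace.exp A x = Complex.exp a • x := by
  have hpow : ∀ n : ℕ, (A ^ n) x = a ^ n • x := by
    intro n
    induction n with
    | zero => simp
    | succ n ih =>
      rw [pow_succ, pow_succ, ContinuousLinearMap.mul_apply, h, map_smul, ih, smul_smul,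
        mul_comm]
  have h1 : NormedSpace.exp A x = ∑' (n : ℕ), (((Nat.factorial n : ℝ))⁻¹ • A ^ n) x := by
    rw [NormedSpace.exp_eq_tsum ℝ]
    exact (ContinuousLinearMap.apply ℂ V x).map_tsum (NormedSpace.expSeries_summable' (𝕂 := ℝ) A)
  rw [h1]
  have h2 : ∀ n : ℕ, (((Nat.factorial n : ℝ))⁻¹ • A ^ n) x = (((Nat.factorial n : ℝ))⁻¹ • a ^ n) • x := by
    intro n
    rw [ContinuousLinearMap.smul_apply, hpow]
    exact (smul_assoc _ _ _).symm
  simp_rw [h2]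
  rw [(NormedSpace.expSeries_summable' (𝕂 := ℝ) a).tsum_smul_const]
  congr 1
  have hexp : NormedSpace.exp a = ∑' (n : ℕ), ((Nat.factorial n : ℝ))⁻¹ • a ^ n := by
    rw [NormedSpace.exp_eq_tsum ℝ]
  rw [← hexp, ← Complex.exp_eq_exp_ℂ]

lemma exp_smul_eigen (φ : V →ₗ[ℂ] V) (t : ℝ) {μ : ℝ} {x : V}
    (hx : x ∈ Module.End.eigenspace φ (μ : ℂ)) :
    NormedSpace.exp (t • LinearMap.toContinuousLinearMap φ) x
      = Complex.exp ((t : ℂ) * μ) • x := by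
  apply exp_apply_eigen
  have h1 : (t • LinearMap.toContinuousLinearMap φ) x = t • ((μ : ℂ) • x) := by
    rw [ContinuousLinearMap.smul_apply]
    congr 1
    rw [LinearMap.coe_toContinuousLinearMap']
    exact Module.End.mem_eigenspace_iff.mp hx
  rw [h1, ← smul_assoc, Complex.real_smul]

lemma tendsto_mk {α : Type*} {l : Filter α} {f : α → V} (hf : ∀ s, f s ≠ 0) {z : V}
    (hz : z ≠ 0) (h : Tendsto f l (nhds z)) :
    Tendsto (fun s => Projectivization.mk ℂ (f s) (hf s)) l
      (nhds (Projectivization.mk ℂ z hz)) := by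
  have hc : Continuous (fun x : {v : V // v ≠ 0} => Projectivization.mk ℂ x.1 x.2) :=
    continuous_quotient_mk'
  have h1 : Tendsto (fun s => (⟨f s, hf s⟩ : {v : V // v ≠ 0})) l (nhds ⟨z, hz⟩) :=
    tendsto_subtype_rng.mpr h
  exact (hc.tendsto _).comp h1

/-- The "angle with `u`" function, continuous on projective space. -/
noncomputable def projInner (u : V) : ℙ ℂ V → ℝ :=
  Projectivization.lift (fun x => ‖(⟪u, x.1⟫ : ℂ)‖ ^ 2 / ‖x.1‖ ^ 2) (by
    rintro ⟨a, ha⟩ ⟨b, hb⟩ t h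
    simp only at h ⊢
    have ht : t ≠ 0 := by rintro rfl; rw [zero_smul] at h; exact ha h
    rw [h, inner_smul_right, norm_mul, norm_smul, mul_pow, mul_pow,
      mul_div_mul_left _ _ (pow_ne_zero 2 (norm_ne_zero_iff.2 ht))])

@[simp] lemma projInner_mk (u v : V) (hv : v ≠ 0) :
    projInner u (Projectivization.mk ℂ v hv) = ‖(⟪u, v⟫ : ℂ)‖ ^ 2 / ‖v‖ ^ 2 := rfl

lemma continuous_projInner (u : V) : Continuous (projInner u) := by
  apply Continuous.quotient_lift
  have h1 : Continuous fun x : {v : V // v ≠ 0} => ‖(⟪u, x.1⟫ : ℂ)‖ ^ 2 :=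
    ((continuous_const.inner continuous_subtype_val).norm.pow 2)
  have h2 : Continuous fun x : {v : V // v ≠ 0} => ‖x.1‖ ^ 2 :=
    (continuous_subtype_val.norm.pow 2)
  exact h1.div h2 fun x => pow_ne_zero 2 (norm_ne_zero_iff.2 x.2)

lemma tendsto_projFlow_mk (φ : V →ₗ[ℂ] V) {v z : V} (hv : v ≠ 0) (hz : z ≠ 0) (lam : ℝ)
    (h : Tendsto (fun t : ℝ => Complex.exp (-((t : ℂ) * lam)) •
        NormedSpace.exp (t • LinearMap.toContinuousLinearMap φ) v) atTop (nhds z)) :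
    Tendsto (fun t : ℝ => projFlow φ t (Projectivization.mk ℂ v hv)) atTop
      (nhds (Projectivization.mk ℂ z hz)) := by
  have hne : ∀ t : ℝ, Complex.exp (-((t : ℂ) * lam)) •
      NormedSpace.exp (t • LinearMap.toContinuousLinearMap φ) v ≠ 0 :=
    fun t => smul_ne_zero (Complex.exp_ne_zero _) (exp_ne_zero_vec _ hv)
  refine (tendsto_mk hne hz h).congr fun t => ?_
  rw [mk_smul (exp_ne_zero_vec _ hv) (Complex.exp_ne_zero _) (hne t)]
  unfold projFlow
  rw [Projectivization.map_mk]
  rfl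

lemma tendsto_cexp_neg {d : ℝ} (hd : d < 0) :
    Tendsto (fun t : ℝ => Complex.exp (((t * d : ℝ)) : ℂ)) atTop (nhds 0) := by
  rw [tendsto_zero_iff_norm_tendsto_zero]
  have h1 : ∀ t : ℝ, ‖Complex.exp (((t * d : ℝ)) : ℂ)‖ = Real.exp (t * d) := fun t => by
    rw [Complex.norm_exp_ofReal]
  have h2 : Tendsto (fun t : ℝ => t * d) atTop atBot :=
    (tendsto_mul_const_atBot_of_neg hd).2 tendsto_id
  have h3 := Real.tendsto_exp_atBot.comp h2
  simpa only [h1, Function.comp_def] using h3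

lemma tendsto_exp_smul_zero (φ : V →ₗ[ℂ] V) (ν : ℝ) (S : Set ℝ) (hS : ∀ μ ∈ S, μ < ν)
    {w : V} (hw : w ∈ ⨆ μ ∈ S, Module.End.eigenspace φ (μ : ℂ)) :
    Tendsto (fun t : ℝ => Complex.exp (-((t : ℂ) * ν)) •
      NormedSpace.exp (t • LinearMap.toContinuousLinearMap φ) w) atTop (nhds 0) := by
  let W0 : Submodule ℂ V :=
    { carrier := {x | Tendsto (fun t : ℝ => Complex.exp (-((t : ℂ) * ν)) •
        NormedSpace.exp (t • LinearMap.toContinuousLinearMap φ) x) atTop (nhds 0)}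
      add_mem' := by
        intro a b ha hb
        have h := ha.add hb
        simp only [Set.mem_setOf_eq] at *
        simpa [map_add, smul_add] using h
      zero_mem' := by
        simp only [Set.mem_setOf_eq, map_zero, smul_zero]
        exact tendsto_const_nhds
      smul_mem' := by
        intro c x hx
        have h := hx.const_smul c
        simp only [Set.mem_setOf_eq] at *
        simpa [map_smul, smul_comm c] using h }
  have hle : (⨆ μ ∈ S, Module.End.eigenspace φ (μ : ℂ)) ≤ W0 := by
    refine iSup₂_le fun μ hμ => fun x hx => ?_
    show Tendsto _ _ _
    have heq : ∀ t : ℝ, Complex.exp (-((t : ℂ) * ν)) •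
        NormedSpace.exp (t • LinearMap.toContinuousLinearMap φ) x
        = Complex.exp (((t * (μ - ν) : ℝ)) : ℂ) • x := by
      intro t
      rw [exp_smul_eigen φ t hx, smul_smul, ← Complex.exp_add]
      congr 2
      push_cast
      ring
    have h0 := (tendsto_cexp_neg (show μ - ν < 0 by linarith [hS μ hμ])).smul_const x
    rw [zero_smul] at h0
    exact h0.congr fun t => (heq t).symm
  exact hle hw

theorem core (φ : V →ₗ[ℂ] V) (hφ : LinearMap.IsSymmetric φ) (ν : ℝ)
    (u : V) (hu : u ∈ Module.End.eigenspace φ (ν : ℂ)) (hu0 : u ≠ 0) :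
    ({y : ℙ ℂ V | Tendsto (fun t : ℝ => projFlow φ t y) atTop
        (nhds (Projectivization.mk ℂ u hu0))}
      = {y : ℙ ℂ V | ∃ w ∈ (⨆ μ ∈ {μ : ℝ | Module.End.HasEigenvalue φ (μ : ℂ) ∧ μ < ν},
            Module.End.eigenspace φ (μ : ℂ)),
          ∃ h : u + w ≠ 0, y = Projectivization.mk ℂ (u + w) h}) := by
  ext y
  simp only [Set.mem_setOf_eq]
  constructor
  · intro hy
    obtain ⟨v, hv, rfl⟩ : ∃ (v : V) (hv : v ≠ 0), Projectivization.mk ℂ v hv = y :=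
      ⟨y.rep, y.rep_nonzero, y.mk_rep⟩
    have hn' : Module.finrank ℂ V = Module.finrank ℂ V := rfl
    set n := Module.finrank ℂ V
    set b := hφ.eigenvectorBasis hn' with hbdef
    set α := hφ.eigenvalues hn' with hαdef
    have hb : ∀ i, φ (b i) = (α i : ℂ) • b i := fun i => hφ.apply_eigenvectorBasis hn' i
    have hbmem : ∀ i, b i ∈ Module.End.eigenspace φ (α i : ℂ) := fun i =>
      Module.End.mem_eigenspace_iff.mpr (hb i)
    set c : Fin n → ℂ := fun i => b.repr v i with hc
    have hsum : ∑ i, c i • b i = v := b.sum_repr v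
    have hex : ∃ i, c i ≠ 0 := by
      by_contra hcon
      push_neg at hcon
      apply hv
      rw [← hsum]
      simp [hcon]
    set s : Finset (Fin n) := Finset.univ.filter (fun i => c i ≠ 0) with hs
    have hsne : s.Nonempty := by
      obtain ⟨i, hi⟩ := hex
      exact ⟨i, Finset.mem_filter.mpr ⟨Finset.mem_univ i, hi⟩⟩
    set lam := s.sup' hsne α with hlam
    obtain ⟨i₀, hi₀s, hi₀⟩ := Finset.exists_mem_eq_sup' hsne α
    have hci₀ : c i₀ ≠ 0 := (Finset.mem_filter.mp hi₀s).2
    have hle : ∀ i, c i ≠ 0 → α i ≤ lam := fun i hi =>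
      Finset.le_sup' α (Finset.mem_filter.mpr ⟨Finset.mem_univ i, hi⟩)
    set L : Fin n → V := fun i => if α i = lam then c i • b i else 0 with hL
    set z := ∑ i, L i with hz
    have hortho := orthonormal_iff_ite.mp b.orthonormal
    have hzi : (⟪b i₀, z⟫ : ℂ) = c i₀ := by
      rw [hz, inner_sum, Finset.sum_eq_single i₀]
      · rw [hL]
        simp only
        rw [if_pos hi₀.symm, inner_smul_right, hortho i₀ i₀, if_pos rfl, mul_one]
      · intro j _ hj
        by_cases hja : α j = lam
        · rw [hL]
          simp only
          rw [if_pos hja, inner_smul_right, hortho i₀ j, if_neg (Ne.symm hj), mul_zero]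
        · rw [hL]
          simp only
          rw [if_neg hja, inner_zero_right]
      · intro h
        exact absurd (Finset.mem_univ i₀) h
    have hz0 : z ≠ 0 := fun h => hci₀ (by rw [← hzi, h, inner_zero_right])
    -- convergence of the flow of v to [z]
    have hflow : ∀ t : ℝ, Complex.exp (-((t : ℂ) * lam)) •
        NormedSpace.exp (t • LinearMap.toContinuousLinearMap φ) v
        = ∑ i, Complex.exp (((t * (α i - lam) : ℝ)) : ℂ) • (c i • b i) := by
      intro t
      conv_lhs => rw [← hsum]
      rw [map_sum, Finset.smul_sum]
      refine Finset.sum_congr rfl fun i _ => ?_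
      rw [map_smul, exp_smul_eigen φ t (hbmem i), smul_comm (c i), smul_smul,
        ← Complex.exp_add]
      congr 2
      push_cast
      ring
    have hzconv : Tendsto (fun t : ℝ => Complex.exp (-((t : ℂ) * lam)) •
        NormedSpace.exp (t • LinearMap.toContinuousLinearMap φ) v) atTop (nhds z) := by
      have hterm : ∀ i : Fin n,
          Tendsto (fun t : ℝ => Complex.exp (((t * (α i - lam) : ℝ)) : ℂ) • (c i • b i))
            atTop (nhds (L i)) := by
        intro i
        by_cases hi : α i = lam
        · have : ∀ t : ℝ, Complex.exp (((t * (α i - lam) : ℝ)) : ℂ) • (c i • b i)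
              = c i • b i := by
            intro t
            rw [hi, sub_self, mul_zero, Complex.ofReal_zero, Complex.exp_zero, one_smul]
          rw [hL]
          simp only [if_pos hi]
          exact tendsto_const_nhds.congr fun t => (this t).symm
        · by_cases hci : c i = 0
          · have : ∀ t : ℝ, Complex.exp (((t * (α i - lam) : ℝ)) : ℂ) • (c i • b i)
                = 0 := by intro t; rw [hci, zero_smul, smul_zero]
            rw [hL]
            simp only [if_neg hi]
            exact tendsto_const_nhds.congr fun t => (this t).symm
          · have hlt : α i < lam := lt_of_le_of_ne (hle i hci) hi
            have h0 := (tendsto_cexp_neg (show α i - lam < 0 by linarith)).smul_const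
              (c i • b i)
            rw [zero_smul] at h0
            rw [hL]
            simp only [if_neg hi]
            exact h0
      have := tendsto_finset_sum Finset.univ (fun i _ => hterm i)
      rw [← hz] at this
      exact this.congr fun t => (hflow t).symm
    have hflowz := tendsto_projFlow_mk φ hv hz0 lam hzconv
    -- limit uniqueness through projInner u
    have hPu := ((continuous_projInner u).tendsto _).comp hy
    have hPz := ((continuous_projInner u).tendsto _).comp hflowz
    have heq : projInner u (Projectivization.mk ℂ u hu0)
        = projInner u (Projectivization.mk ℂ z hz0) := tendsto_nhds_unique hPu hPz
    rw [projInner_mk, projInner_mk] at heq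
    have hnu : ‖u‖ ≠ 0 := norm_ne_zero_iff.2 hu0
    have hnz : ‖z‖ ≠ 0 := norm_ne_zero_iff.2 hz0
    have huu : ‖(⟪u, u⟫ : ℂ)‖ = ‖u‖ ^ 2 := by
      rw [inner_self_eq_norm_sq_to_K, norm_pow, RCLike.norm_ofReal, abs_norm]
    rw [huu] at heq
    have hl : (‖u‖ ^ 2) ^ 2 / ‖u‖ ^ 2 = ‖u‖ ^ 2 := by
      rw [div_eq_iff (pow_ne_zero 2 hnu)]; ring
    rw [hl, eq_div_iff (pow_ne_zero 2 hnz)] at heq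
    have h2 : ‖(⟪u, z⟫ : ℂ)‖ ^ 2 = (‖u‖ * ‖z‖) ^ 2 := by rw [mul_pow]; linarith
    have hinn : ‖(⟪u, z⟫ : ℂ)‖ = ‖u‖ * ‖z‖ := by
      have h3 := congrArg Real.sqrt h2
      rwa [Real.sqrt_sq (norm_nonneg _), Real.sqrt_sq (by positivity)] at h3
    obtain ⟨r, hr0, hzr⟩ := (norm_inner_eq_norm_iff hu0 hz0).1 hinn
    -- lam = ν
    have hφz : φ z = (lam : ℂ) • z := by
      rw [hz, map_sum, Finset.smul_sum]
      refine Finset.sum_congr rfl fun i _ => ?_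
      rw [hL]
      by_cases hi : α i = lam
      · simp only [if_pos hi]
        rw [map_smul, hb i, hi, smul_comm]
      · simp only [if_neg hi, map_zero, smul_zero]
    have hlamν : lam = ν := by
      have h1 : φ z = (ν : ℂ) • z := by
        rw [hzr, map_smul, Module.End.mem_eigenspace_iff.mp hu, smul_comm]
      have h3 : ((lam : ℂ) - ν) • z = 0 := by
        rw [sub_smul, ← hφz, h1, sub_self]
      have h4 := (smul_eq_zero.mp h3).resolve_right hz0
      have h5 : (lam : ℂ) = (ν : ℂ) := sub_eq_zero.mp h4
      exact_mod_cast h5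
    -- the complementary part
    set w' := v - z with hw'
    have hw'mem : w' ∈ ⨆ μ ∈ {μ : ℝ | Module.End.HasEigenvalue φ (μ : ℂ) ∧ μ < ν},
        Module.End.eigenspace φ (μ : ℂ) := by
      have hw'sum : w' = ∑ i, (c i • b i - L i) := by
        rw [hw', ← hsum, hz, Finset.sum_sub_distrib]
      rw [hw'sum]
      apply Submodule.sum_mem
      intro i _
      by_cases hi : α i = lam
      · have : c i • b i - L i = 0 := by rw [hL]; simp [hi]
        rw [this]; exact Submodule.zero_mem _
      · have hterm : c i • b i - L i = c i • b i := by rw [hL]; simp [hi]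
        rw [hterm]
        by_cases hci : c i = 0
        · rw [hci, zero_smul]; exact Submodule.zero_mem _
        · have hαlt : α i < ν := hlamν ▸ lt_of_le_of_ne (hle i hci) hi
          have hmem : Module.End.eigenspace φ ((α i : ℝ) : ℂ)
              ≤ ⨆ μ ∈ {μ : ℝ | Module.End.HasEigenvalue φ (μ : ℂ) ∧ μ < ν},
                Module.End.eigenspace φ (μ : ℂ) :=
            le_iSup₂ (f := fun (μ : ℝ) (_ : μ ∈ {μ : ℝ | Module.End.HasEigenvalue φ (μ : ℂ)
                ∧ μ < ν}) => Module.End.eigenspace φ (μ : ℂ)) (α i)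
              ⟨hφ.hasEigenvalue_eigenvalues hn' i, hαlt⟩
          exact hmem (Submodule.smul_mem _ _ (hbmem i))
    have hvdecomp : u + r⁻¹ • w' = r⁻¹ • v := by
      rw [hw', hzr, smul_sub, smul_smul, inv_mul_cancel₀ hr0, one_smul]
      abel
    have hne : u + r⁻¹ • w' ≠ 0 := by
      rw [hvdecomp]
      exact smul_ne_zero (inv_ne_zero hr0) hv
    refine ⟨r⁻¹ • w', Submodule.smul_mem _ _ hw'mem, hne, ?_⟩
    have hrv : r⁻¹ • v ≠ 0 := smul_ne_zero (inv_ne_zero hr0) hv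
    exact ((mk_congr hne hrv hvdecomp).trans (mk_smul hv (inv_ne_zero hr0) hrv)).symm
  · rintro ⟨w, hw, hne, rfl⟩
    apply tendsto_projFlow_mk φ hne hu0 ν
    have h1 : ∀ t : ℝ, Complex.exp (-((t : ℂ) * ν)) •
        NormedSpace.exp (t • LinearMap.toContinuousLinearMap φ) (u + w)
        = u + Complex.exp (-((t : ℂ) * ν)) •
            NormedSpace.exp (t • LinearMap.toContinuousLinearMap φ) w := by
      intro t
      rw [map_add, smul_add]
      congr 1
      rw [exp_smul_eigen φ t hu, smul_smul, ← Complex.exp_add, neg_add_cancel,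
        Complex.exp_zero, one_smul]
    have h2 := tendsto_exp_smul_zero φ ν _ (fun μ hμ => hμ.2) hw
    have h3 := (tendsto_const_nhds (x := u) (f := atTop)).add h2
    rw [add_zero] at h3
    exact h3.congr fun t => (h1 t).symm

lemma projFlow_congr (φ ψ : V →ₗ[ℂ] V) (s t : ℝ)
    (h : s • LinearMap.toContinuousLinearMap φ = t • LinearMap.toContinuousLinearMap ψ) :
    projFlow φ s = projFlow ψ t := by
  funext y
  induction y using Projectivization.ind with
  | h v hv =>
    unfold projFlow
    rw [Projectivization.map_mk, Projectivization.map_mk]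
    exact mk_congr _ _ (by rw [h])

lemma projFlow_neg (φ : V →ₗ[ℂ] V) (t : ℝ) : projFlow (-φ) t = projFlow φ (-t) :=
  projFlow_congr _ _ _ _ (by rw [map_neg, smul_neg, neg_smul])

lemma eigenspace_neg (φ : V →ₗ[ℂ] V) (c : ℂ) :
    Module.End.eigenspace (-φ) c = Module.End.eigenspace φ (-c) := by
  ext x
  rw [Module.End.mem_eigenspace_iff, Module.End.mem_eigenspace_iff, LinearMap.neg_apply,
    neg_smul, neg_eq_iff_eq_neg]

lemma hasEigenvalue_neg (φ : V →ₗ[ℂ] V) (c : ℂ) (h : Module.End.HasEigenvalue (-φ) c) :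
    Module.End.HasEigenvalue φ (-c) := by
  rw [Module.End.hasEigenvalue_iff] at h ⊢
  rwa [eigenspace_neg] at h

end ProjFlowAux

open ProjFlowAux in
/-- For the projective flow generated by a self-adjoint `φ`, the stable
set of the fixed point `x = [u]`, `u ∈ V_ν \ {0}`, is `{[u+w] : w ∈ ⊕_{μ<ν} V_μ}` and the
unstable set is `{[u+w] : w ∈ ⊕_{μ>ν} V_μ}`. -/
theorem projFlow_stable_unstable_sets
    {V : Type*} [NormedAddCommGroup V] [InnerProductSpace ℂ V] [FiniteDimensional ℂ V]
    (φ : V →ₗ[ℂ] V) (hφ : LinearMap.IsSymmetric φ)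
    (ν : ℝ) (hν : Module.End.HasEigenvalue φ (ν : ℂ))
    (u : V) (hu : u ∈ Module.End.eigenspace φ (ν : ℂ)) (hu0 : u ≠ 0) :
    ({y : ℙ ℂ V | Tendsto (fun t : ℝ => projFlow φ t y) atTop
        (nhds (Projectivization.mk ℂ u hu0))}
      = {y : ℙ ℂ V | ∃ w ∈ (⨆ μ ∈ {μ : ℝ | Module.End.HasEigenvalue φ (μ : ℂ) ∧ μ < ν},
            Module.End.eigenspace φ (μ : ℂ)),
          ∃ h : u + w ≠ 0, y = Projectivization.mk ℂ (u + w) h}) ∧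
    ({y : ℙ ℂ V | Tendsto (fun t : ℝ => projFlow φ t y) atBot
        (nhds (Projectivization.mk ℂ u hu0))}
      = {y : ℙ ℂ V | ∃ w ∈ (⨆ μ ∈ {μ : ℝ | Module.End.HasEigenvalue φ (μ : ℂ) ∧ ν < μ},
            Module.End.eigenspace φ (μ : ℂ)),
          ∃ h : u + w ≠ 0, y = Projectivization.mk ℂ (u + w) h}) := by
  constructor
  · exact core φ hφ ν u hu hu0
  · have hφn : LinearMap.IsSymmetric (-φ) := by
      intro x y
      simp only [LinearMap.neg_apply, inner_neg_left, inner_neg_right]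
      rw [hφ x y]
    have hu' : u ∈ Module.End.eigenspace (-φ) (((-ν : ℝ)) : ℂ) := by
      rw [Complex.ofReal_neg, eigenspace_neg, neg_neg]
      exact hu
    have hcore := core (-φ) hφn (-ν) u hu' hu0
    have hR : (⨆ μ ∈ {μ : ℝ | Module.End.HasEigenvalue (-φ) (μ : ℂ) ∧ μ < -ν},
          Module.End.eigenspace (-φ) (μ : ℂ))
        = ⨆ μ ∈ {μ : ℝ | Module.End.HasEigenvalue φ (μ : ℂ) ∧ ν < μ},
            Module.End.eigenspace φ (μ : ℂ) := by
      apply le_antisymm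
      · refine iSup₂_le fun μ hμ => ?_
        obtain ⟨h1, h2⟩ := hμ
        have e1 : Module.End.eigenspace (-φ) (μ : ℂ)
            = Module.End.eigenspace φ (((-μ : ℝ)) : ℂ) := by
          rw [eigenspace_neg, Complex.ofReal_neg]
        have h1' : Module.End.HasEigenvalue φ (((-μ : ℝ)) : ℂ) := by
          have := hasEigenvalue_neg φ (μ : ℂ) h1
          rwa [Complex.ofReal_neg]
        rw [e1]
        exact le_iSup₂ (f := fun (μ : ℝ) (_ : μ ∈ {μ : ℝ | Module.End.HasEigenvalue φ (μ : ℂ)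
            ∧ ν < μ}) => Module.End.eigenspace φ (μ : ℂ)) (-μ) ⟨h1', by linarith⟩
      · refine iSup₂_le fun μ hμ => ?_
        obtain ⟨h1, h2⟩ := hμ
        have e1 : Module.End.eigenspace φ (μ : ℂ)
            = Module.End.eigenspace (-φ) (((-μ : ℝ)) : ℂ) := by
          rw [Complex.ofReal_neg, eigenspace_neg, neg_neg]
        have h1' : Module.End.HasEigenvalue (-φ) (((-μ : ℝ)) : ℂ) := by
          rw [Module.End.hasEigenvalue_iff, ← e1]
          exact Module.End.hasEigenvalue_iff.mp h1
        rw [e1]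
        exact le_iSup₂ (f := fun (μ : ℝ) (_ : μ ∈ {μ : ℝ | Module.End.HasEigenvalue (-φ) (μ : ℂ)
            ∧ μ < -ν}) => Module.End.eigenspace (-φ) (μ : ℂ)) (-μ) ⟨h1', by linarith⟩
    have hL : {y : ℙ ℂ V | Tendsto (fun t : ℝ => projFlow φ t y) atBot
          (nhds (Projectivization.mk ℂ u hu0))}
        = {y : ℙ ℂ V | Tendsto (fun t : ℝ => projFlow (-φ) t y) atTop
          (nhds (Projectivization.mk ℂ u hu0))} := by
      ext y
      simp only [Set.mem_setOf_eq]
      rw [← Filter.map_neg_atTop, Filter.tendsto_map'_iff]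
      exact tendsto_congr fun t => by
        simp only [Function.comp_apply]
        rw [← projFlow_neg]
    rw [hL, hcore, hR]
end

section
/- Let V be a finite-dimensional complex inner product space, φ : V → V self-adjoint, and ν ∈ spec(φ). Then A_ν := ℙ(⊕_{μ∈spec(φ), μ≥ν} V_μ) is an attractor for the projective flow Φ generated by φ, and its dual repellor is A_ν* := ℙ(V) ∖ W⁺(A_ν) = ℙ(⊕_{μ∈spec(φ), μ<ν} V_μ). -/
open scoped LinearAlgebra.Projectivization
open Filter

variable {V : Type*} [NormedAddCommGroup V] [InnerProductSpace ℂ V] [FiniteDimensional ℂ V]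

/-- `W⁺(A)`: points whose forward orbit converges to the invariant set `A`
(formulated topologically: the orbit is eventually in every neighborhood of `A`;
on the compact metrizable space `ℙ(V)` this coincides with `dist(Φ(t,x),A) → 0`). -/
def stableSet {X : Type*} [TopologicalSpace X] (Φ : ℝ → X → X) (A : Set X) : Set X :=
  {x : X | ∀ U ∈ nhdsSet A, ∀ᶠ t : ℝ in atTop, Φ t x ∈ U}

/-- An attractor: a compact invariant set admitting a neighborhood `U` with
`Φ(t, cl U) ⊆ int U` for all `t > 0` and `A = ⋂_{t ≥ 0} Φ(t, U)`. -/
def IsAttractor {X : Type*} [TopologicalSpace X] (Φ : ℝ → X → X) (A : Set X) : Prop :=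
  IsCompact A ∧ (∀ t : ℝ, Φ t '' A = A) ∧
    ∃ U : Set X, A ⊆ interior U ∧ (∀ t > (0 : ℝ), Φ t '' closure U ⊆ interior U) ∧
      A = ⋂ t ∈ Set.Ici (0 : ℝ), Φ t '' U

namespace PFAux

open Module Filter Projectivization
open scoped LinearAlgebra.Projectivization

variable {V : Type*} [NormedAddCommGroup V] [InnerProductSpace ℂ V] [FiniteDimensional ℂ V]

lemma expApplyEigen (ψ : V →L[ℂ] V) (c : ℂ) (v : V) (h : ψ v = c • v) :
    NormedSpace.exp ψ v = Complex.exp c • v := by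
  have hpow : ∀ n : ℕ, (ψ ^ n) v = c ^ n • v := by
    intro n
    induction n with
    | zero => simp
    | succ n ih =>
      rw [pow_succ, ContinuousLinearMap.mul_apply, h, map_smul, ih, pow_succ, smul_smul, mul_comm]
  have hsum : Summable fun n : ℕ => ((n.factorial : ℝ))⁻¹ • ψ ^ n :=
    NormedSpace.expSeries_summable' (𝕂 := ℝ) ψ
  have key := (ContinuousLinearMap.apply ℂ V v).restrictScalars ℝ |>.map_tsum hsum
  simp only [ContinuousLinearMap.coe_restrictScalars', ContinuousLinearMap.apply_apply] at key
  rw [NormedSpace.exp_eq_tsum ℝ, key]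
  have hsum2 : Summable fun n : ℕ => ((n.factorial : ℝ))⁻¹ • c ^ n :=
    NormedSpace.expSeries_summable' (𝕂 := ℝ) c
  have key2 := ((ContinuousLinearMap.id ℂ ℂ).smulRight v |>.restrictScalars ℝ).map_tsum hsum2
  simp only [ContinuousLinearMap.coe_restrictScalars', ContinuousLinearMap.smulRight_apply,
    ContinuousLinearMap.coe_id', id_eq] at key2
  have h3 : (∑' n : ℕ, ((n.factorial : ℝ))⁻¹ • c ^ n) = NormedSpace.exp c := by
    rw [NormedSpace.exp_eq_tsum ℝ]
  rw [show (Complex.exp c • v) = (∑' n : ℕ, ((n.factorial : ℝ))⁻¹ • c ^ n) • v by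
      rw [h3, ← Complex.exp_eq_exp_ℂ],
    key2]
  refine tsum_congr fun n => ?_
  simp only [ContinuousLinearMap.smul_apply, hpow n, smul_assoc]

variable {φ : V →ₗ[ℂ] V} (hφ : LinearMap.IsSymmetric φ)

noncomputable def eb (hφ : LinearMap.IsSymmetric φ) :
    OrthonormalBasis (Fin (Module.finrank ℂ V)) ℂ V :=
  hφ.eigenvectorBasis rfl

noncomputable def ev (hφ : LinearMap.IsSymmetric φ) (i : Fin (Module.finrank ℂ V)) : ℝ :=
  hφ.eigenvalues rfl i

lemma apply_eb (i : Fin (Module.finrank ℂ V)) :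
    φ (eb hφ i) = (ev hφ i : ℂ) • eb hφ i :=
  hφ.apply_eigenvectorBasis rfl i

lemma hasEigenvalue_ev (i : Fin (Module.finrank ℂ V)) :
    Module.End.HasEigenvalue φ (ev hφ i : ℂ) :=
  hφ.hasEigenvalue_eigenvalues rfl i

noncomputable def Eflow (φ : V →ₗ[ℂ] V) (t : ℝ) : V →L[ℂ] V :=
  NormedSpace.exp (t • LinearMap.toContinuousLinearMap φ)

lemma Eflow_eb (t : ℝ) (i : Fin (Module.finrank ℂ V)) :
    Eflow φ t (eb hφ i) = Complex.exp (t * ev hφ i) • eb hφ i := by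
  apply expApplyEigen
  rw [ContinuousLinearMap.smul_apply, LinearMap.coe_toContinuousLinearMap', apply_eb hφ,
    ← smul_assoc, Complex.real_smul]

lemma repr_Eflow (t : ℝ) (v : V) (i : Fin (Module.finrank ℂ V)) :
    (eb hφ).repr (Eflow φ t v) i = Complex.exp (t * ev hφ i) * (eb hφ).repr v i := by
  conv_lhs => rw [← (eb hφ).sum_repr v]
  rw [map_sum]
  simp_rw [map_smul, Eflow_eb hφ, OrthonormalBasis.repr_apply_apply, smul_smul]
  rw [(eb hφ).orthonormal.inner_right_fintype]
  rw [mul_comm]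

lemma norm_repr_Eflow (t : ℝ) (v : V) (i : Fin (Module.finrank ℂ V)) :
    ‖(eb hφ).repr (Eflow φ t v) i‖ = Real.exp (t * ev hφ i) * ‖(eb hφ).repr v i‖ := by
  rw [repr_Eflow hφ, norm_mul, Complex.norm_exp]
  norm_num

noncomputable def gS (hφ : LinearMap.IsSymmetric φ) (s : Finset (Fin (Module.finrank ℂ V)))
    (v : V) : ℝ :=
  Real.sqrt (∑ i ∈ s, ‖(eb hφ).repr v i‖ ^ 2)

lemma gS_nonneg (s : Finset (Fin (Module.finrank ℂ V))) (v : V) : 0 ≤ gS hφ s v :=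
  Real.sqrt_nonneg _

lemma sq_gS (s : Finset (Fin (Module.finrank ℂ V))) (v : V) :
    gS hφ s v ^ 2 = ∑ i ∈ s, ‖(eb hφ).repr v i‖ ^ 2 :=
  Real.sq_sqrt (Finset.sum_nonneg fun i _ => by positivity)

lemma gS_smul (s : Finset (Fin (Module.finrank ℂ V))) (a : ℂ) (v : V) :
    gS hφ s (a • v) = ‖a‖ * gS hφ s v := by
  unfold gS
  have : ∀ i ∈ s, ‖(eb hφ).repr (a • v) i‖ ^ 2 = ‖a‖ ^ 2 * ‖(eb hφ).repr v i‖ ^ 2 := by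
    intro i _
    rw [map_smul]
    simp [norm_smul, mul_pow]
  rw [Finset.sum_congr rfl this, ← Finset.mul_sum, Real.sqrt_mul (by positivity),
    Real.sqrt_sq (norm_nonneg a)]

lemma gS_eq_zero_iff (s : Finset (Fin (Module.finrank ℂ V))) (v : V) :
    gS hφ s v = 0 ↔ ∀ i ∈ s, (eb hφ).repr v i = 0 := by
  unfold gS
  rw [Real.sqrt_eq_zero (Finset.sum_nonneg fun i _ => by positivity),
    Finset.sum_eq_zero_iff_of_nonneg (fun i _ => by positivity)]
  constructor
  · intro h i hi
    have := h i hi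
    simpa using this
  · intro h i hi
    simp [h i hi]

lemma sum_univ_sq_repr (v : V) : ∑ i, ‖(eb hφ).repr v i‖ ^ 2 = ‖v‖ ^ 2 := by
  have h1 : ‖(eb hφ).repr v‖ = ‖v‖ := (eb hφ).repr.norm_map v
  rw [← h1, EuclideanSpace.norm_eq, Real.sq_sqrt (Finset.sum_nonneg fun i _ => by positivity)]

lemma gS_sq_add_compl (s : Finset (Fin (Module.finrank ℂ V))) (v : V) :
    gS hφ s v ^ 2 + gS hφ sᶜ v ^ 2 = ‖v‖ ^ 2 := by
  rw [sq_gS, sq_gS, Finset.sum_add_sum_compl, sum_univ_sq_repr]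

lemma gS_le_norm (s : Finset (Fin (Module.finrank ℂ V))) (v : V) : gS hφ s v ≤ ‖v‖ := by
  have h := Finset.sum_le_sum_of_subset_of_nonneg (Finset.subset_univ s)
    (fun i _ _ => by positivity : ∀ i ∈ Finset.univ, i ∉ s → 0 ≤ ‖(eb hφ).repr v i‖ ^ 2)
  calc gS hφ s v ≤ Real.sqrt (∑ i, ‖(eb hφ).repr v i‖ ^ 2) := Real.sqrt_le_sqrt h
    _ = ‖v‖ := by rw [sum_univ_sq_repr hφ, Real.sqrt_sq (norm_nonneg v)]

lemma continuous_gS (s : Finset (Fin (Module.finrank ℂ V))) : Continuous (gS hφ s) := by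
  apply Real.continuous_sqrt.comp
  apply continuous_finset_sum
  intro i _
  have : (fun v : V => ‖(eb hφ).repr v i‖ ^ 2) = fun v => ‖(innerSL ℂ ((eb hφ) i)) v‖ ^ 2 := by
    funext v
    rw [(eb hφ).repr_apply_apply]
    rfl
  rw [this]
  exact (innerSL ℂ _).continuous.norm.pow 2

lemma gS_Eflow_le (s : Finset (Fin (Module.finrank ℂ V))) {C t : ℝ}
    (hC : ∀ i ∈ s, ev hφ i ≤ C) (ht : 0 ≤ t) (v : V) :
    gS hφ s (Eflow φ t v) ≤ Real.exp (t * C) * gS hφ s v := by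
  unfold gS
  rw [← Real.sqrt_sq (le_of_lt (Real.exp_pos (t * C))), ← Real.sqrt_mul (by positivity),
    Finset.mul_sum]
  apply Real.sqrt_le_sqrt
  apply Finset.sum_le_sum
  intro i hi
  rw [norm_repr_Eflow hφ, mul_pow]
  have : Real.exp (t * ev hφ i) ≤ Real.exp (t * C) :=
    Real.exp_le_exp.2 (mul_le_mul_of_nonneg_left (hC i hi) ht)
  exact mul_le_mul_of_nonneg_right (pow_le_pow_left₀ (Real.exp_pos _).le this 2) (by positivity)

lemma le_gS_Eflow (s : Finset (Fin (Module.finrank ℂ V))) {C t : ℝ}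
    (hC : ∀ i ∈ s, C ≤ ev hφ i) (ht : 0 ≤ t) (v : V) :
    Real.exp (t * C) * gS hφ s v ≤ gS hφ s (Eflow φ t v) := by
  unfold gS
  rw [← Real.sqrt_sq (le_of_lt (Real.exp_pos (t * C))), ← Real.sqrt_mul (by positivity),
    Finset.mul_sum]
  apply Real.sqrt_le_sqrt
  apply Finset.sum_le_sum
  intro i hi
  rw [norm_repr_Eflow hφ, mul_pow]
  have : Real.exp (t * C) ≤ Real.exp (t * ev hφ i) :=
    Real.exp_le_exp.2 (mul_le_mul_of_nonneg_left (hC i hi) ht)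
  exact mul_le_mul_of_nonneg_right (pow_le_pow_left₀ (Real.exp_pos _).le this 2) (by positivity)

lemma gS_Eflow_eq_zero_iff (s : Finset (Fin (Module.finrank ℂ V))) (t : ℝ) (v : V) :
    gS hφ s (Eflow φ t v) = 0 ↔ gS hφ s v = 0 := by
  rw [gS_eq_zero_iff, gS_eq_zero_iff]
  refine forall₂_congr fun i hi => ?_
  rw [repr_Eflow hφ, mul_eq_zero]
  simp [Complex.exp_ne_zero]

lemma mem_iSup_eigenspace_iff (P : ℝ → Prop) (v : V) :
    v ∈ (⨆ μ ∈ {μ : ℝ | Module.End.HasEigenvalue φ (μ : ℂ) ∧ P μ},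
        Module.End.eigenspace φ (μ : ℂ)) ↔
      ∀ i, ¬ P (ev hφ i) → (eb hφ).repr v i = 0 := by
  constructor
  · intro hv
    set K : Submodule ℂ V :=
      ⨅ i ∈ {i : Fin (Module.finrank ℂ V) | ¬ P (ev hφ i)},
        LinearMap.ker ((eb hφ).toBasis.coord i) with hK
    have hle : (⨆ μ ∈ {μ : ℝ | Module.End.HasEigenvalue φ (μ : ℂ) ∧ P μ},
        Module.End.eigenspace φ (μ : ℂ)) ≤ K := by
      refine iSup₂_le fun μ hμ => ?_
      intro w hw
      rw [Module.End.mem_eigenspace_iff] at hw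
      simp only [hK, Submodule.mem_iInf, LinearMap.mem_ker, Set.mem_setOf_eq]
      intro i hi
      rw [Module.Basis.coord_apply, (eb hφ).coe_toBasis_repr_apply]
      have h1 : (inner ℂ (φ ((eb hφ) i)) w : ℂ) = inner ℂ ((eb hφ) i) (φ w) := hφ _ _
      rw [apply_eb hφ, hw, inner_smul_left, inner_smul_right, Complex.conj_ofReal] at h1
      have h2 : ((ev hφ i : ℂ) - (μ : ℂ)) * (inner ℂ ((eb hφ) i) w : ℂ) = 0 := by
        rw [sub_mul, h1, sub_self]
      rcases mul_eq_zero.1 h2 with h | h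
      · exfalso
        apply hi
        have : (ev hφ i : ℂ) = (μ : ℂ) := by linear_combination h
        rw [Complex.ofReal_inj] at this
        rw [this]
        exact hμ.2
      · rw [(eb hφ).repr_apply_apply]
        exact h
    have := hle hv
    simp only [hK, Submodule.mem_iInf, LinearMap.mem_ker, Set.mem_setOf_eq] at this
    intro i hi
    have h3 := this i hi
    rwa [Module.Basis.coord_apply, (eb hφ).coe_toBasis_repr_apply] at h3
  · intro h
    rw [← (eb hφ).sum_repr v]
    refine Submodule.sum_mem _ fun i _ => ?_
    by_cases hP : P (ev hφ i)
    · refine Submodule.smul_mem _ _ ?_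
      refine Submodule.mem_iSup_of_mem (ev hφ i) ?_
      refine Submodule.mem_iSup_of_mem ⟨hasEigenvalue_ev hφ i, hP⟩ ?_
      exact Module.End.mem_eigenspace_iff.2 (apply_eb hφ i)
    · rw [h i hP, zero_smul]
      exact Submodule.zero_mem _

end PFAux

namespace PFAux

open Module Filter Projectivization
open scoped LinearAlgebra.Projectivization

variable {V : Type*} [NormedAddCommGroup V] [InnerProductSpace ℂ V] [FiniteDimensional ℂ V]

lemma mk_congr {v w : V} (hv : v ≠ 0) (h : v = w) :
    Projectivization.mk ℂ v hv = Projectivization.mk ℂ w (h ▸ hv) := by subst h; rfl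

lemma continuous_pl {α : Type*} [TopologicalSpace α] {f : ℙ ℂ V → α}
    (h : Continuous fun p : {v : V // v ≠ 0} => f (Projectivization.mk ℂ p.1 p.2)) :
    Continuous f := by
  have hq : Topology.IsQuotientMap (fun p : {v : V // v ≠ 0} => Projectivization.mk ℂ p.1 p.2) :=
    isQuotientMap_quotient_mk'
  rw [hq.continuous_iff]
  exact h

lemma compactSpace_pl : CompactSpace (ℙ ℂ V) := by
  constructor
  have hS : IsCompact {p : {v : V // v ≠ 0} | ‖p.1‖ = 1} := by
    rw [Topology.IsEmbedding.subtypeVal.isCompact_iff]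
    have himg : Subtype.val '' {p : {v : V // v ≠ 0} | ‖p.1‖ = 1} = Metric.sphere (0 : V) 1 := by
      ext w
      simp only [Set.mem_image, Set.mem_setOf_eq, mem_sphere_zero_iff_norm]
      constructor
      · rintro ⟨p, hp, rfl⟩; exact hp
      · intro hw
        have hw0 : w ≠ 0 := by
          intro h; rw [h, norm_zero] at hw; exact one_ne_zero hw.symm
        exact ⟨⟨w, hw0⟩, hw, rfl⟩
    rw [himg]
    exact isCompact_sphere 0 1
  have hcont : Continuous (fun p : {v : V // v ≠ 0} => Projectivization.mk ℂ p.1 p.2) :=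
    continuous_quotient_mk'
  have himg2 : (fun p : {v : V // v ≠ 0} => Projectivization.mk ℂ p.1 p.2) ''
      {p : {v : V // v ≠ 0} | ‖p.1‖ = 1} = Set.univ := by
    apply Set.eq_of_subset_of_subset (Set.subset_univ _)
    intro x _
    have hv : x.rep ≠ 0 := x.rep_nonzero
    have hnv : ‖x.rep‖ ≠ 0 := norm_ne_zero_iff.2 hv
    have hcne : ((‖x.rep‖ : ℂ))⁻¹ ≠ 0 := by
      simp [Complex.ofReal_ne_zero, hnv]
    refine ⟨⟨((‖x.rep‖ : ℂ))⁻¹ • x.rep, smul_ne_zero hcne hv⟩, ?_, ?_⟩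
    · show ‖((‖x.rep‖ : ℂ))⁻¹ • x.rep‖ = 1
      rw [norm_smul, norm_inv, Complex.norm_real, Real.norm_eq_abs,
        abs_of_nonneg (norm_nonneg _), inv_mul_cancel₀ hnv]
    · show Projectivization.mk ℂ _ _ = x
      conv_rhs => rw [← x.mk_rep]
      apply (Projectivization.mk_eq_mk_iff' ℂ _ _ _ x.rep_nonzero).2
      exact ⟨((‖x.rep‖ : ℂ))⁻¹, rfl⟩
  rw [← himg2]
  exact hS.image hcont

variable {φ : V →ₗ[ℂ] V} (hφ : LinearMap.IsSymmetric φ)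

lemma Eflow_add (t s : ℝ) (v : V) : Eflow φ t (Eflow φ s v) = Eflow φ (t + s) v := by
  unfold Eflow
  rw [← ContinuousLinearMap.mul_apply, add_smul, NormedSpace.exp_add_of_commute_of_mem_ball (𝕂 := ℝ)
    (hx := (NormedSpace.expSeries_radius_eq_top ℝ (V →L[ℂ] V)).symm ▸ edist_lt_top _ _)
    (hy := (NormedSpace.expSeries_radius_eq_top ℝ (V →L[ℂ] V)).symm ▸ edist_lt_top _ _)]
  exact ((Commute.refl (LinearMap.toContinuousLinearMap φ)).smul_left t).smul_right s

lemma Eflow_zero (v : V) : Eflow φ 0 v = v := by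
  unfold Eflow
  rw [zero_smul, NormedSpace.exp_zero, ContinuousLinearMap.one_apply]

lemma Eflow_ne_zero (t : ℝ) {v : V} (hv : v ≠ 0) : Eflow φ t v ≠ 0 := by
  intro h
  apply hv
  apply exp_toLinearMap_injective (t • LinearMap.toContinuousLinearMap φ)
  show Eflow φ t v = Eflow φ t 0
  rw [h, map_zero]

lemma projFlow_mk (t : ℝ) {v : V} (hv : v ≠ 0) :
    projFlow φ t (Projectivization.mk ℂ v hv) =
      Projectivization.mk ℂ (Eflow φ t v) (Eflow_ne_zero t hv) := by
  unfold projFlow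
  rw [Projectivization.map_mk]
  rfl

lemma projFlow_eq (t : ℝ) (x : ℙ ℂ V) :
    projFlow φ t x =
      Projectivization.mk ℂ (Eflow φ t x.rep) (Eflow_ne_zero t x.rep_nonzero) := by
  conv_lhs => rw [← x.mk_rep, projFlow_mk]

lemma projFlow_projFlow (t s : ℝ) (x : ℙ ℂ V) :
    projFlow φ t (projFlow φ s x) = projFlow φ (t + s) x := by
  induction x using Projectivization.ind with
  | h v hv =>
    rw [projFlow_mk, projFlow_mk, projFlow_mk]
    exact mk_congr _ (Eflow_add t s v)

lemma projFlow_zero (x : ℙ ℂ V) : projFlow φ 0 x = x := by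
  induction x using Projectivization.ind with
  | h v hv =>
    rw [projFlow_mk]
    exact mk_congr _ (Eflow_zero v)

lemma projFlow_neg_cancel (t : ℝ) (x : ℙ ℂ V) :
    projFlow φ t (projFlow φ (-t) x) = x := by
  rw [projFlow_projFlow, add_neg_cancel, projFlow_zero]

variable (ν : ℝ)

noncomputable def splus (hφ : LinearMap.IsSymmetric φ) (ν : ℝ) :
    Finset (Fin (Module.finrank ℂ V)) :=
  Finset.univ.filter fun i => ν ≤ ev hφ i

noncomputable def sminus (hφ : LinearMap.IsSymmetric φ) (ν : ℝ) :
    Finset (Fin (Module.finrank ℂ V)) :=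
  Finset.univ.filter fun i => ev hφ i < ν

lemma mem_splus {i : Fin (Module.finrank ℂ V)} : i ∈ splus hφ ν ↔ ν ≤ ev hφ i := by
  simp [splus]

lemma mem_sminus {i : Fin (Module.finrank ℂ V)} : i ∈ sminus hφ ν ↔ ev hφ i < ν := by
  simp [sminus]

lemma compl_splus : (splus hφ ν)ᶜ = sminus hφ ν := by
  ext i
  simp [splus, sminus, not_le]

noncomputable def cb (hφ : LinearMap.IsSymmetric φ) (ν : ℝ) : ℝ :=
  if h : (sminus hφ ν).Nonempty then (sminus hφ ν).sup' h (ev hφ) else ν - 1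

lemma cb_lt : cb hφ ν < ν := by
  unfold cb
  split_ifs with h
  · exact (Finset.sup'_lt_iff h).2 fun i hi => (mem_sminus hφ ν).1 hi
  · linarith

lemma ev_le_cb : ∀ i ∈ sminus hφ ν, ev hφ i ≤ cb hφ ν := by
  intro i hi
  unfold cb
  split_ifs with h
  · exact Finset.le_sup' _ hi
  · exact absurd ⟨i, hi⟩ h

lemma gplus_pos {v : V} (hv : v ≠ 0)
    (h : gS hφ (sminus hφ ν) v ≤ gS hφ (splus hφ ν) v) :
    0 < gS hφ (splus hφ ν) v := by
  rcases (gS_nonneg hφ (splus hφ ν) v).lt_or_eq with hlt | heq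
  · exact hlt
  · exfalso
    have h2 : gS hφ (sminus hφ ν) v = 0 :=
      le_antisymm (heq ▸ h) (gS_nonneg hφ _ v)
    have h3 := gS_sq_add_compl hφ (splus hφ ν) v
    rw [compl_splus hφ ν, ← heq, h2] at h3
    norm_num at h3
    exact hv (norm_eq_zero.1 (pow_eq_zero_iff (n := 2) (by norm_num) |>.1 h3.symm))

noncomputable def grat (hφ : LinearMap.IsSymmetric φ)
    (s : Finset (Fin (Module.finrank ℂ V))) (x : ℙ ℂ V) : ℝ :=
  gS hφ s x.rep / ‖x.rep‖

lemma grat_mk (s : Finset (Fin (Module.finrank ℂ V))) {v : V} (hv : v ≠ 0) :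
    grat hφ s (Projectivization.mk ℂ v hv) = gS hφ s v / ‖v‖ := by
  obtain ⟨a, ha⟩ := Projectivization.exists_smul_eq_mk_rep ℂ v hv
  unfold grat
  rw [← ha, Units.smul_def, gS_smul, norm_smul,
    mul_div_mul_left _ _ (norm_ne_zero_iff.2 a.ne_zero)]

lemma continuous_grat (s : Finset (Fin (Module.finrank ℂ V))) :
    Continuous (grat hφ s) := by
  apply continuous_pl
  have heq : (fun p : {v : V // v ≠ 0} => grat hφ s (Projectivization.mk ℂ p.1 p.2)) =
      fun p : {v : V // v ≠ 0} => gS hφ s p.1 / ‖p.1‖ := by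
    funext p
    exact grat_mk hφ s p.2
  rw [heq]
  exact ((continuous_gS hφ s).comp continuous_subtype_val).div
    (continuous_norm.comp continuous_subtype_val)
    (fun p => norm_ne_zero_iff.2 p.2)

lemma grat_nonneg (s : Finset (Fin (Module.finrank ℂ V))) (x : ℙ ℂ V) :
    0 ≤ grat hφ s x :=
  div_nonneg (gS_nonneg hφ s _) (norm_nonneg _)

lemma grat_le_one (s : Finset (Fin (Module.finrank ℂ V))) (x : ℙ ℂ V) :
    grat hφ s x ≤ 1 :=
  div_le_one_of_le₀ (gS_le_norm hφ s _) (norm_nonneg _)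

lemma grat_eq_zero_iff (s : Finset (Fin (Module.finrank ℂ V))) (x : ℙ ℂ V) :
    grat hφ s x = 0 ↔ gS hφ s x.rep = 0 := by
  unfold grat
  rw [div_eq_zero_iff]
  have : ‖x.rep‖ ≠ 0 := norm_ne_zero_iff.2 x.rep_nonzero
  tauto

lemma mem_A_mk {v : V} (hv : v ≠ 0) :
    (Projectivization.mk ℂ v hv).submodule ≤
      (⨆ μ ∈ {μ : ℝ | Module.End.HasEigenvalue φ (μ : ℂ) ∧ ν ≤ μ},
        Module.End.eigenspace φ (μ : ℂ)) ↔ gS hφ (sminus hφ ν) v = 0 := by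
  rw [Projectivization.submodule_mk, Submodule.span_singleton_le_iff_mem,
    mem_iSup_eigenspace_iff hφ, gS_eq_zero_iff]
  constructor
  · intro h i hi
    exact h i (not_le.2 ((mem_sminus hφ ν).1 hi))
  · intro h i hi
    exact h i ((mem_sminus hφ ν).2 (not_le.1 hi))

lemma mem_A_rep (x : ℙ ℂ V) :
    x.submodule ≤
      (⨆ μ ∈ {μ : ℝ | Module.End.HasEigenvalue φ (μ : ℂ) ∧ ν ≤ μ},
        Module.End.eigenspace φ (μ : ℂ)) ↔ gS hφ (sminus hφ ν) x.rep = 0 := by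
  have := mem_A_mk hφ ν x.rep_nonzero
  rwa [x.mk_rep] at this

lemma mem_B_mk {v : V} (hv : v ≠ 0) :
    (Projectivization.mk ℂ v hv).submodule ≤
      (⨆ μ ∈ {μ : ℝ | Module.End.HasEigenvalue φ (μ : ℂ) ∧ μ < ν},
        Module.End.eigenspace φ (μ : ℂ)) ↔ gS hφ (splus hφ ν) v = 0 := by
  rw [Projectivization.submodule_mk, Submodule.span_singleton_le_iff_mem,
    mem_iSup_eigenspace_iff hφ, gS_eq_zero_iff]
  constructor
  · intro h i hi
    exact h i (not_lt.2 ((mem_splus hφ ν).1 hi))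
  · intro h i hi
    exact h i ((mem_splus hφ ν).2 (not_lt.1 hi))

lemma mem_B_rep (x : ℙ ℂ V) :
    x.submodule ≤
      (⨆ μ ∈ {μ : ℝ | Module.End.HasEigenvalue φ (μ : ℂ) ∧ μ < ν},
        Module.End.eigenspace φ (μ : ℂ)) ↔ gS hφ (splus hφ ν) x.rep = 0 := by
  have := mem_B_mk hφ ν x.rep_nonzero
  rwa [x.mk_rep] at this

end PFAux

namespace PFAux

open Module Filter Projectivization
open scoped LinearAlgebra.Projectivization

variable {V : Type*} [NormedAddCommGroup V] [InnerProductSpace ℂ V] [FiniteDimensional ℂ V]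
variable {φ : V →ₗ[ℂ] V} (hφ : LinearMap.IsSymmetric φ) (ν : ℝ)

lemma grat_projFlow (t : ℝ) (s : Finset (Fin (Module.finrank ℂ V))) (x : ℙ ℂ V) :
    grat hφ s (projFlow φ t x) = gS hφ s (Eflow φ t x.rep) / ‖Eflow φ t x.rep‖ := by
  rw [projFlow_eq, grat_mk]

include hφ in
lemma flowA_iff (t : ℝ) (x : ℙ ℂ V) :
    (projFlow φ t x).submodule ≤
        (⨆ μ ∈ {μ : ℝ | Module.End.HasEigenvalue φ (μ : ℂ) ∧ ν ≤ μ},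
          Module.End.eigenspace φ (μ : ℂ)) ↔
      x.submodule ≤
        (⨆ μ ∈ {μ : ℝ | Module.End.HasEigenvalue φ (μ : ℂ) ∧ ν ≤ μ},
          Module.End.eigenspace φ (μ : ℂ)) := by
  rw [projFlow_eq, mem_A_mk hφ ν, gS_Eflow_eq_zero_iff hφ, ← mem_A_rep hφ ν]

include hφ in
lemma flowB_iff (t : ℝ) (x : ℙ ℂ V) :
    (projFlow φ t x).submodule ≤
        (⨆ μ ∈ {μ : ℝ | Module.End.HasEigenvalue φ (μ : ℂ) ∧ μ < ν},
          Module.End.eigenspace φ (μ : ℂ)) ↔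
      x.submodule ≤
        (⨆ μ ∈ {μ : ℝ | Module.End.HasEigenvalue φ (μ : ℂ) ∧ μ < ν},
          Module.End.eigenspace φ (μ : ℂ)) := by
  rw [projFlow_eq, mem_B_mk hφ ν, gS_Eflow_eq_zero_iff hφ, ← mem_B_rep hφ ν]

include hφ in
theorem attractor : IsAttractor (projFlow φ)
    {x : ℙ ℂ V | x.submodule ≤
      ⨆ μ ∈ {μ : ℝ | Module.End.HasEigenvalue φ (μ : ℂ) ∧ ν ≤ μ},
        Module.End.eigenspace φ (μ : ℂ)} := by
  classical
  have hcs : CompactSpace (ℙ ℂ V) := compactSpace_pl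
  set A : Set (ℙ ℂ V) := {x : ℙ ℂ V | x.submodule ≤
      ⨆ μ ∈ {μ : ℝ | Module.End.HasEigenvalue φ (μ : ℂ) ∧ ν ≤ μ},
        Module.End.eigenspace φ (μ : ℂ)} with hAdef
  have hmemA : ∀ x : ℙ ℂ V, x ∈ A ↔ gS hφ (sminus hφ ν) x.rep = 0 := fun x => mem_A_rep hφ ν x
  have hAr : A = (grat hφ (sminus hφ ν)) ⁻¹' {0} := by
    ext x
    rw [Set.mem_preimage, Set.mem_singleton_iff, grat_eq_zero_iff]
    exact hmemA x
  have hAclosed : IsClosed A := by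
    rw [hAr]
    exact isClosed_singleton.preimage (continuous_grat hφ _)
  have hflowA : ∀ (t : ℝ) (x : ℙ ℂ V), projFlow φ t x ∈ A ↔ x ∈ A := fun t x =>
    flowA_iff hφ ν t x
  refine ⟨hAclosed.isCompact, ?_, ?_⟩
  · intro t
    ext x
    constructor
    · rintro ⟨y, hy, rfl⟩
      exact (hflowA t y).2 hy
    · intro hx
      exact ⟨projFlow φ (-t) x, (hflowA (-t) x).2 hx, projFlow_neg_cancel t x⟩
  · set U : Set (ℙ ℂ V) :=
      {x : ℙ ℂ V | grat hφ (sminus hφ ν) x < grat hφ (splus hφ ν) x} with hUdef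
    have hUopen : IsOpen U := isOpen_lt (continuous_grat hφ _) (continuous_grat hφ _)
    have hAU : A ⊆ U := by
      intro x hx
      have h0 : gS hφ (sminus hφ ν) x.rep = 0 := (hmemA x).1 hx
      have hpos : 0 < gS hφ (splus hφ ν) x.rep :=
        gplus_pos hφ ν x.rep_nonzero (by rw [h0]; exact gS_nonneg hφ _ _)
      show grat hφ (sminus hφ ν) x < grat hφ (splus hφ ν) x
      unfold grat
      rw [h0, zero_div]
      exact div_pos hpos (norm_pos_iff.2 x.rep_nonzero)
    have hstep : ∀ t : ℝ, 0 < t → ∀ x : ℙ ℂ V,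
        grat hφ (sminus hφ ν) x ≤ grat hφ (splus hφ ν) x → projFlow φ t x ∈ U := by
      intro t ht x hx
      have hv : x.rep ≠ 0 := x.rep_nonzero
      have hnv : (0 : ℝ) < ‖x.rep‖ := norm_pos_iff.2 hv
      have hx' : gS hφ (sminus hφ ν) x.rep ≤ gS hφ (splus hφ ν) x.rep :=
        (div_le_div_iff_of_pos_right hnv).1 hx
      have hpos := gplus_pos hφ ν hv hx'
      have h1 : gS hφ (sminus hφ ν) (Eflow φ t x.rep) ≤
          Real.exp (t * cb hφ ν) * gS hφ (sminus hφ ν) x.rep :=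
        gS_Eflow_le hφ _ (ev_le_cb hφ ν) ht.le _
      have h2 : Real.exp (t * ν) * gS hφ (splus hφ ν) x.rep ≤
          gS hφ (splus hφ ν) (Eflow φ t x.rep) :=
        le_gS_Eflow hφ _ (fun i hi => (mem_splus hφ ν).1 hi) ht.le _
      have h3 : Real.exp (t * cb hφ ν) * gS hφ (sminus hφ ν) x.rep <
          Real.exp (t * ν) * gS hφ (splus hφ ν) x.rep := by
        calc Real.exp (t * cb hφ ν) * gS hφ (sminus hφ ν) x.rep
            ≤ Real.exp (t * cb hφ ν) * gS hφ (splus hφ ν) x.rep :=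
              mul_le_mul_of_nonneg_left hx' (Real.exp_pos _).le
          _ < Real.exp (t * ν) * gS hφ (splus hφ ν) x.rep :=
              mul_lt_mul_of_pos_right
                (Real.exp_lt_exp.2 (mul_lt_mul_of_pos_left (cb_lt hφ ν) ht)) hpos
      have hin : gS hφ (sminus hφ ν) (Eflow φ t x.rep) <
          gS hφ (splus hφ ν) (Eflow φ t x.rep) :=
        lt_of_le_of_lt h1 (lt_of_lt_of_le h3 h2)
      show grat hφ (sminus hφ ν) (projFlow φ t x) < grat hφ (splus hφ ν) (projFlow φ t x)
      rw [grat_projFlow hφ, grat_projFlow hφ]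
      exact (div_lt_div_iff_of_pos_right (norm_pos_iff.2 (Eflow_ne_zero t hv))).2 hin
    refine ⟨U, ?_, ?_, ?_⟩
    · rw [hUopen.interior_eq]
      exact hAU
    · intro t ht
      rw [hUopen.interior_eq]
      rintro _ ⟨y, hy, rfl⟩
      apply hstep t ht
      have hclU : closure U ⊆
          {x : ℙ ℂ V | grat hφ (sminus hφ ν) x ≤ grat hφ (splus hφ ν) x} := by
        apply closure_minimal _
          (isClosed_le (continuous_grat hφ _) (continuous_grat hφ _))
        intro z hz
        have hz' : grat hφ (sminus hφ ν) z < grat hφ (splus hφ ν) z := hz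
        exact le_of_lt hz'
      exact hclU hy
    · apply Set.eq_of_subset_of_subset
      · intro x hx
        apply Set.mem_iInter₂.2
        intro t ht
        exact ⟨projFlow φ (-t) x, hAU ((hflowA (-t) x).2 hx), projFlow_neg_cancel t x⟩
      · intro x hx
        rw [Set.mem_setOf_eq, mem_A_rep hφ ν]
        have hbound : ∀ t : ℝ, 0 ≤ t →
            gS hφ (sminus hφ ν) x.rep ≤ Real.exp (t * (cb hφ ν - ν)) * ‖x.rep‖ := by
          intro t ht
          obtain ⟨y, hyU, hyx⟩ := Set.mem_iInter₂.1 hx t ht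
          have hw : y.rep ≠ 0 := y.rep_nonzero
          have hyU' : gS hφ (sminus hφ ν) y.rep ≤ gS hφ (splus hφ ν) y.rep :=
            ((div_le_div_iff_of_pos_right (norm_pos_iff.2 hw)).1 (le_of_lt hyU))
          have hmkeq : Projectivization.mk ℂ x.rep x.rep_nonzero =
              Projectivization.mk ℂ (Eflow φ t y.rep) (Eflow_ne_zero t hw) := by
            rw [x.mk_rep, ← hyx, projFlow_eq]
          obtain ⟨a, ha⟩ := (Projectivization.mk_eq_mk_iff ℂ _ _ _ _).1 hmkeq
          have e1 : gS hφ (sminus hφ ν) (Eflow φ t y.rep) ≤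
              Real.exp (t * cb hφ ν) * gS hφ (sminus hφ ν) y.rep :=
            gS_Eflow_le hφ _ (ev_le_cb hφ ν) ht _
          have e2 : Real.exp (t * ν) * gS hφ (splus hφ ν) y.rep ≤
              gS hφ (splus hφ ν) (Eflow φ t y.rep) :=
            le_gS_Eflow hφ _ (fun i hi => (mem_splus hφ ν).1 hi) ht _
          have e3 : gS hφ (splus hφ ν) (Eflow φ t y.rep) ≤ ‖Eflow φ t y.rep‖ :=
            gS_le_norm hφ _ _
          have h5 : Real.exp (t * cb hφ ν) =
              Real.exp (t * (cb hφ ν - ν)) * Real.exp (t * ν) := by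
            rw [← Real.exp_add]
            ring_nf
          have key : gS hφ (sminus hφ ν) (Eflow φ t y.rep) ≤
              Real.exp (t * (cb hφ ν - ν)) * ‖Eflow φ t y.rep‖ := by
            calc gS hφ (sminus hφ ν) (Eflow φ t y.rep)
                ≤ Real.exp (t * cb hφ ν) * gS hφ (sminus hφ ν) y.rep := e1
              _ ≤ Real.exp (t * cb hφ ν) * gS hφ (splus hφ ν) y.rep :=
                  mul_le_mul_of_nonneg_left hyU' (Real.exp_pos _).le
              _ = Real.exp (t * (cb hφ ν - ν)) * (Real.exp (t * ν) * gS hφ (splus hφ ν) y.rep) := by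
                  rw [h5, mul_assoc]
              _ ≤ Real.exp (t * (cb hφ ν - ν)) * gS hφ (splus hφ ν) (Eflow φ t y.rep) :=
                  mul_le_mul_of_nonneg_left e2 (Real.exp_pos _).le
              _ ≤ Real.exp (t * (cb hφ ν - ν)) * ‖Eflow φ t y.rep‖ :=
                  mul_le_mul_of_nonneg_left e3 (Real.exp_pos _).le
          calc gS hφ (sminus hφ ν) x.rep
              = gS hφ (sminus hφ ν) ((a : ℂ) • Eflow φ t y.rep) := by
                rw [← Units.smul_def, ha]
            _ = ‖(a : ℂ)‖ * gS hφ (sminus hφ ν) (Eflow φ t y.rep) := gS_smul hφ _ _ _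
            _ ≤ ‖(a : ℂ)‖ * (Real.exp (t * (cb hφ ν - ν)) * ‖Eflow φ t y.rep‖) :=
                mul_le_mul_of_nonneg_left key (norm_nonneg _)
            _ = Real.exp (t * (cb hφ ν - ν)) * ‖(a : ℂ) • Eflow φ t y.rep‖ := by
                rw [norm_smul]; ring
            _ = Real.exp (t * (cb hφ ν - ν)) * ‖x.rep‖ := by
                rw [← Units.smul_def, ha]
        have htends : Tendsto (fun t : ℝ => Real.exp (t * (cb hφ ν - ν)) * ‖x.rep‖)
            atTop (nhds 0) := by
          have h1 : Tendsto (fun t : ℝ => t * (cb hφ ν - ν)) atTop atBot :=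
            Tendsto.atTop_mul_const_of_neg (by linarith [cb_lt hφ ν]) tendsto_id
          have h2 := (Real.tendsto_exp_atBot.comp h1).mul_const ‖x.rep‖
          simpa using h2
        have h0 : gS hφ (sminus hφ ν) x.rep ≤ 0 := by
          apply ge_of_tendsto htends
          filter_upwards [eventually_ge_atTop (0 : ℝ)] with t ht using hbound t ht
        exact le_antisymm h0 (gS_nonneg hφ _ _)

include hφ in
theorem repellor :
    (Set.univ \ stableSet (projFlow φ)
        {x : ℙ ℂ V | x.submodule ≤
          ⨆ μ ∈ {μ : ℝ | Module.End.HasEigenvalue φ (μ : ℂ) ∧ ν ≤ μ},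
            Module.End.eigenspace φ (μ : ℂ)})
      = {x : ℙ ℂ V | x.submodule ≤
          ⨆ μ ∈ {μ : ℝ | Module.End.HasEigenvalue φ (μ : ℂ) ∧ μ < ν},
            Module.End.eigenspace φ (μ : ℂ)} := by
  classical
  have hcs : CompactSpace (ℙ ℂ V) := compactSpace_pl
  set A : Set (ℙ ℂ V) := {x : ℙ ℂ V | x.submodule ≤
      ⨆ μ ∈ {μ : ℝ | Module.End.HasEigenvalue φ (μ : ℂ) ∧ ν ≤ μ},
        Module.End.eigenspace φ (μ : ℂ)} with hAdef
  set B : Set (ℙ ℂ V) := {x : ℙ ℂ V | x.submodule ≤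
      ⨆ μ ∈ {μ : ℝ | Module.End.HasEigenvalue φ (μ : ℂ) ∧ μ < ν},
        Module.End.eigenspace φ (μ : ℂ)} with hBdef
  have hmemA : ∀ x : ℙ ℂ V, x ∈ A ↔ gS hφ (sminus hφ ν) x.rep = 0 := fun x => mem_A_rep hφ ν x
  have hmemB : ∀ x : ℙ ℂ V, x ∈ B ↔ gS hφ (splus hφ ν) x.rep = 0 := fun x => mem_B_rep hφ ν x
  have hBr : B = (grat hφ (splus hφ ν)) ⁻¹' {0} := by
    ext x
    rw [Set.mem_preimage, Set.mem_singleton_iff, grat_eq_zero_iff]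
    exact hmemB x
  have hBclosed : IsClosed B := by
    rw [hBr]
    exact isClosed_singleton.preimage (continuous_grat hφ _)
  ext x
  simp only [Set.mem_diff, Set.mem_univ, true_and]
  constructor
  · intro hns
    by_contra hB
    apply hns
    have hBne : gS hφ (splus hφ ν) x.rep ≠ 0 := fun h => hB ((hmemB x).2 h)
    have hpos : 0 < gS hφ (splus hφ ν) x.rep :=
      lt_of_le_of_ne (gS_nonneg hφ _ _) (Ne.symm hBne)
    intro O hO
    rw [← subset_interior_iff_mem_nhdsSet] at hO
    -- find N with Z N ⊆ interior O
    set Z : ℕ → Set (ℙ ℂ V) := fun n =>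
      {z : ℙ ℂ V | grat hφ (sminus hφ ν) z ≤ (1 / (n + 1 : ℝ)) * grat hφ (splus hφ ν) z}
      with hZdef
    have hZclosed : ∀ n : ℕ, IsClosed (Z n) := fun n =>
      isClosed_le (continuous_grat hφ _) (continuous_const.mul (continuous_grat hφ _))
    have hZanti : ∀ {n m : ℕ}, n ≤ m → Z m ⊆ Z n := by
      intro n m hnm z hz
      simp only [hZdef, Set.mem_setOf_eq] at hz ⊢
      refine le_trans hz ?_
      apply mul_le_mul_of_nonneg_right _ (grat_nonneg hφ _ _)
      apply one_div_le_one_div_of_le (by positivity)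
      exact_mod_cast by linarith
    have hKc : IsCompact (interior O)ᶜ := isOpen_interior.isClosed_compl.isCompact
    have hempty : (interior O)ᶜ ∩ ⋂ n : ℕ, Z n = ∅ := by
      rw [Set.eq_empty_iff_forall_notMem]
      rintro z ⟨hz1, hz2⟩
      rw [Set.mem_iInter] at hz2
      apply hz1
      apply hO
      rw [hmemA, ← grat_eq_zero_iff hφ]
      have hle : ∀ n : ℕ, grat hφ (sminus hφ ν) z ≤ 1 / (n + 1 : ℝ) := by
        intro n
        refine le_trans (hz2 n) ?_
        calc (1 / (n + 1 : ℝ)) * grat hφ (splus hφ ν) z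
            ≤ (1 / (n + 1 : ℝ)) * 1 :=
              mul_le_mul_of_nonneg_left (grat_le_one hφ _ _) (by positivity)
          _ = 1 / (n + 1 : ℝ) := mul_one _
      have hle0 : grat hφ (sminus hφ ν) z ≤ 0 :=
        ge_of_tendsto tendsto_one_div_add_atTop_nhds_zero_nat
          (Eventually.of_forall hle)
      exact le_antisymm hle0 (grat_nonneg hφ _ _)
    obtain ⟨I, hI⟩ := hKc.elim_finite_subfamily_closed Z hZclosed hempty
    have hNex : ∃ N : ℕ, Z N ⊆ interior O := by
      by_cases hIe : I.Nonempty
      · refine ⟨I.max' hIe, ?_⟩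
        intro z hz
        by_contra hzO
        have hmem : z ∈ (interior O)ᶜ ∩ ⋂ n ∈ I, Z n :=
          ⟨hzO, Set.mem_iInter₂.2 fun n hn => hZanti (I.le_max' n hn) hz⟩
        rw [hI] at hmem
        exact hmem
      · refine ⟨0, ?_⟩
        intro z hz
        by_contra hzO
        have hmem : z ∈ (interior O)ᶜ ∩ ⋂ n ∈ I, Z n := by
          refine ⟨hzO, ?_⟩
          rw [Finset.not_nonempty_iff_eq_empty.1 hIe]
          simp
        rw [hI] at hmem
        exact hmem
    obtain ⟨N, hN⟩ := hNex
    -- orbit eventually in Z N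
    have hposR : 0 < (1 / (N + 1 : ℝ)) * gS hφ (splus hφ ν) x.rep := by positivity
    have htends : Tendsto
        (fun t : ℝ => Real.exp (t * (cb hφ ν - ν)) * gS hφ (sminus hφ ν) x.rep)
        atTop (nhds 0) := by
      have h1 : Tendsto (fun t : ℝ => t * (cb hφ ν - ν)) atTop atBot :=
        Tendsto.atTop_mul_const_of_neg (by linarith [cb_lt hφ ν]) tendsto_id
      have h2 := (Real.tendsto_exp_atBot.comp h1).mul_const (gS hφ (sminus hφ ν) x.rep)
      simpa using h2
    filter_upwards [htends.eventually_lt_const hposR, eventually_ge_atTop (0 : ℝ)]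
      with t hlt ht
    apply interior_subset (hN ?_)
    show grat hφ (sminus hφ ν) (projFlow φ t x) ≤
      (1 / (N + 1 : ℝ)) * grat hφ (splus hφ ν) (projFlow φ t x)
    rw [grat_projFlow hφ, grat_projFlow hφ, ← mul_div_assoc]
    have hv : x.rep ≠ 0 := x.rep_nonzero
    have e1 : gS hφ (sminus hφ ν) (Eflow φ t x.rep) ≤
        Real.exp (t * cb hφ ν) * gS hφ (sminus hφ ν) x.rep :=
      gS_Eflow_le hφ _ (ev_le_cb hφ ν) ht _
    have e2 : Real.exp (t * ν) * gS hφ (splus hφ ν) x.rep ≤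
        gS hφ (splus hφ ν) (Eflow φ t x.rep) :=
      le_gS_Eflow hφ _ (fun i hi => (mem_splus hφ ν).1 hi) ht _
    have h5 : Real.exp (t * cb hφ ν) =
        Real.exp (t * (cb hφ ν - ν)) * Real.exp (t * ν) := by
      rw [← Real.exp_add]
      ring_nf
    have hchain : gS hφ (sminus hφ ν) (Eflow φ t x.rep) ≤
        (1 / (N + 1 : ℝ)) * gS hφ (splus hφ ν) (Eflow φ t x.rep) := by
      calc gS hφ (sminus hφ ν) (Eflow φ t x.rep)
          ≤ Real.exp (t * cb hφ ν) * gS hφ (sminus hφ ν) x.rep := e1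
        _ = Real.exp (t * ν) *
            (Real.exp (t * (cb hφ ν - ν)) * gS hφ (sminus hφ ν) x.rep) := by
            rw [h5]; ring
        _ ≤ Real.exp (t * ν) * ((1 / (N + 1 : ℝ)) * gS hφ (splus hφ ν) x.rep) :=
            mul_le_mul_of_nonneg_left hlt.le (Real.exp_pos _).le
        _ = (1 / (N + 1 : ℝ)) * (Real.exp (t * ν) * gS hφ (splus hφ ν) x.rep) := by ring
        _ ≤ (1 / (N + 1 : ℝ)) * gS hφ (splus hφ ν) (Eflow φ t x.rep) :=
            mul_le_mul_of_nonneg_left e2 (by positivity)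
    exact (div_le_div_iff_of_pos_right (norm_pos_iff.2 (Eflow_ne_zero t hv))).2 hchain
  · intro hB hst
    have hAB : A ⊆ Bᶜ := by
      intro z hz hzB
      have h1 : gS hφ (sminus hφ ν) z.rep = 0 := (hmemA z).1 hz
      have h2 : gS hφ (splus hφ ν) z.rep = 0 := (hmemB z).1 hzB
      have h3 := gS_sq_add_compl hφ (splus hφ ν) z.rep
      rw [compl_splus hφ ν, h1, h2] at h3
      norm_num at h3
      exact z.rep_nonzero (norm_eq_zero.1 (pow_eq_zero_iff (n := 2) (by norm_num) |>.1 h3.symm))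
    have hOmem : Bᶜ ∈ nhdsSet A := hBclosed.isOpen_compl.mem_nhdsSet.2 hAB
    obtain ⟨t, ht⟩ := (hst Bᶜ hOmem).exists
    exact ht ((flowB_iff hφ ν t x).2 hB)

end PFAux

/-- For a self-adjoint `φ` and `ν ∈ spec(φ)`, the set
`A_ν = ℙ(⊕_{μ ≥ ν} V_μ)` is an attractor of the projective flow, with dual repellor
`A_ν* = ℙ(V) ∖ W⁺(A_ν) = ℙ(⊕_{μ < ν} V_μ)`. -/
theorem projFlow_attractor_repellor_pair
    {V : Type*} [NormedAddCommGroup V] [InnerProductSpace ℂ V] [FiniteDimensional ℂ V]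
    (φ : V →ₗ[ℂ] V) (hφ : LinearMap.IsSymmetric φ)
    (ν : ℝ) (hν : Module.End.HasEigenvalue φ (ν : ℂ)) :
    IsAttractor (projFlow φ)
      {x : ℙ ℂ V | Projectivization.submodule x ≤
        ⨆ μ ∈ {μ : ℝ | Module.End.HasEigenvalue φ (μ : ℂ) ∧ ν ≤ μ},
          Module.End.eigenspace φ (μ : ℂ)} ∧
    (Set.univ \ stableSet (projFlow φ)
        {x : ℙ ℂ V | Projectivization.submodule x ≤
          ⨆ μ ∈ {μ : ℝ | Module.End.HasEigenvalue φ (μ : ℂ) ∧ ν ≤ μ},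
            Module.End.eigenspace φ (μ : ℂ)})
      = {x : ℙ ℂ V | Projectivization.submodule x ≤
          ⨆ μ ∈ {μ : ℝ | Module.End.HasEigenvalue φ (μ : ℂ) ∧ μ < ν},
            Module.End.eigenspace φ (μ : ℂ)} :=
  ⟨PFAux.attractor hφ ν, PFAux.repellor hφ ν⟩
end
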